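/- Let d ≥ 1, n ≥ 1 be integers and s > 0. Let Q = [0, ns)^d and partition Q into the n^d half-open cubes A_v = ∏_{j=1}^d [v_j s, (v_j+1)s) for v ∈ {0,…,n−1}^d, each of side length s. Let q : ℝ^d → ℝ be continuous and strictly positive on the closed cube Q̄ = [0, ns]^d, with ∫_Q q dλ = 1 (λ = Lebesgue measure). Set p_v = ∫_{A_v} q dλ and δ = sup{ |ln q(x) − ln q(y)| : x, y ∈ Q̄, ‖x − y‖∞ ≤ s }. Then | (−Σ_v p_v ln p_v) + d ln s + ∫_Q q ln q dλ | ≤ δ; that is, the Shannon entropy of the discrete approximation (p_v) differs from H_d(q) − d ln s by at most the oscillation δ of ln q at scale s, where H_d(q) = −∫_Q q ln q dλ. -/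

import Mathlib

open MeasureTheory

lemma ico_union_aux (n : ℕ) (s : ℝ) (hs : 0 < s) :
    Set.Ico (0:ℝ) (n * s) = ⋃ k : Fin n, Set.Ico ((k:ℝ) * s) (((k:ℝ)+1) * s) := by
  ext x
  simp only [Set.mem_iUnion, Set.mem_Ico]
  constructor
  · rintro ⟨hx0, hxn⟩
    have hxs : 0 ≤ x / s := div_nonneg hx0 hs.le
    have h1 : x / s < n := (div_lt_iff₀ hs).2 (by linarith)
    have h0 : (0:ℤ) ≤ ⌊x / s⌋ := Int.floor_nonneg.2 hxs
    have h2 : ⌊x / s⌋ < (n:ℤ) := Int.floor_lt.2 (by exact_mod_cast h1)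
    have hkn : ⌊x / s⌋.toNat < n := by omega
    have hkr : ((⌊x / s⌋.toNat : ℕ) : ℝ) = ((⌊x / s⌋ : ℤ) : ℝ) := by
      exact_mod_cast congrArg Int.cast (Int.toNat_of_nonneg h0)
    refine ⟨⟨⌊x / s⌋.toNat, hkn⟩, ?_, ?_⟩
    · show ((⌊x / s⌋.toNat : ℕ) : ℝ) * s ≤ x
      rw [hkr]
      have := Int.floor_le (x / s)
      calc ((⌊x / s⌋ : ℤ) : ℝ) * s ≤ (x / s) * s := by nlinarith
        _ = x := by field_simp
    · show x < (((⌊x / s⌋.toNat : ℕ) : ℝ) + 1) * s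
      rw [hkr]
      have := Int.lt_floor_add_one (x / s)
      have hx : x = (x / s) * s := by field_simp
      nlinarith
  · rintro ⟨k, hk1, hk2⟩
    have hkn : (k : ℕ) + 1 ≤ n := k.2
    have : ((k:ℝ) + 1) * s ≤ n * s := by
      have : ((k:ℕ):ℝ) + 1 ≤ (n:ℝ) := by exact_mod_cast hkn
      nlinarith
    constructor
    · have : (0:ℝ) ≤ (k:ℝ) * s := by positivity
      linarith
    · linarith


/-- The key analytic lemma of Theorem 7 of the paper (Appendix H): quantizing a
continuous, strictly positive density `q` on the cube `Q = [0, ns)^d` by the `n^d`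
half-open subcubes of side length `s` changes the entropy by `d ln s` up to the
oscillation `δ` of `ln q` at scale `s` (in the sup norm):
`|(-Σ_v p_v ln p_v) + d ln s + ∫_Q q ln q dλ| ≤ δ`. -/
theorem stmt10 (d n : ℕ) (hd : 1 ≤ d) (hn : 1 ≤ n) (s : ℝ) (hs : 0 < s)
    (Q : Set (Fin d → ℝ)) (hQ : Q = {x | ∀ j, x j ∈ Set.Ico (0 : ℝ) (n * s)})
    (Qc : Set (Fin d → ℝ)) (hQc : Qc = {x | ∀ j, x j ∈ Set.Icc (0 : ℝ) (n * s)})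
    (A : (Fin d → Fin n) → Set (Fin d → ℝ))
    (hA : ∀ v, A v = {x | ∀ j, x j ∈ Set.Ico ((v j : ℝ) * s) (((v j : ℝ) + 1) * s)})
    (q : (Fin d → ℝ) → ℝ) (hq_cont : ContinuousOn q Qc) (hq_pos : ∀ x ∈ Qc, 0 < q x)
    (hq_int : ∫ x in Q, q x = 1)
    (p : (Fin d → Fin n) → ℝ) (hp : ∀ v, p v = ∫ x in A v, q x)
    (δ : ℝ)
    (hδ : δ = sSup {t : ℝ | ∃ x ∈ Qc, ∃ y ∈ Qc,
        ‖x - y‖ ≤ s ∧ t = |Real.log (q x) - Real.log (q y)|}) :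
    |(-∑ v, p v * Real.log (p v)) + (d : ℝ) * Real.log s
        + ∫ x in Q, q x * Real.log (q x)| ≤ δ := by
    -- pi-set descriptions
  have hQpi : Q = Set.pi Set.univ (fun _ : Fin d => Set.Ico (0:ℝ) (n*s)) := by
    rw [hQ]; ext x; simp only [Set.mem_setOf_eq, Set.mem_pi, Set.mem_univ, true_implies]
  have hQcpi : Qc = Set.pi Set.univ (fun _ : Fin d => Set.Icc (0:ℝ) (n*s)) := by
    rw [hQc]; ext x; simp only [Set.mem_setOf_eq, Set.mem_pi, Set.mem_univ, true_implies]
  have hApi : ∀ v, A v = Set.pi Set.univ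
      (fun j => Set.Ico ((v j : ℝ) * s) (((v j : ℝ) + 1) * s)) := by
    intro v; rw [hA]; ext x; simp only [Set.mem_setOf_eq, Set.mem_pi, Set.mem_univ, true_implies]
  set clA : (Fin d → Fin n) → Set (Fin d → ℝ) := fun v => Set.pi Set.univ
      (fun j => Set.Icc ((v j : ℝ) * s) (((v j : ℝ) + 1) * s)) with hclA
  have hAcl : ∀ v, A v ⊆ clA v := by
    intro v; rw [hApi]
    exact Set.pi_mono (fun j _ => Set.Ico_subset_Icc_self)
  have hclQc : ∀ v, clA v ⊆ Qc := by
    intro v; rw [hQcpi]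
    refine Set.pi_mono (fun j _ => Set.Icc_subset_Icc ?_ ?_)
    · positivity
    · have : ((v j : ℕ) : ℝ) + 1 ≤ (n:ℝ) := by exact_mod_cast (v j).2
      nlinarith
  have hQQc : Q ⊆ Qc := by
    rw [hQpi, hQcpi]; exact Set.pi_mono (fun j _ => Set.Ico_subset_Icc_self)
  have hQcComp : IsCompact Qc := by
    rw [hQcpi]; exact isCompact_univ_pi (fun _ => isCompact_Icc)
  have hclComp : ∀ v, IsCompact (clA v) :=
    fun v => isCompact_univ_pi (fun _ => isCompact_Icc)
  have hAmeas : ∀ v, MeasurableSet (A v) := by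
    intro v; rw [hApi]; exact MeasurableSet.univ_pi (fun j => measurableSet_Ico)
  have hUnion : Q = ⋃ v, A v := by
    have h := Set.iUnion_univ_pi
      (t := fun (_ : Fin d) (k : Fin n) => Set.Ico ((k:ℝ) * s) (((k:ℝ) + 1) * s))
    rw [hQpi]
    simp only [ico_union_aux n s hs]
    rw [← h]
    exact (Set.iUnion_congr fun v => (hApi v)).symm
  have hdisj : Pairwise (Function.onFun Disjoint A) := by
    intro v w hvw
    obtain ⟨j, hj⟩ := Function.ne_iff.1 hvw
    simp only [Function.onFun]
    rw [Set.disjoint_left]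
    intro x hxv hxw
    rw [hA] at hxv hxw
    have h1 := hxv j
    have h2 := hxw j
    simp only [Set.mem_Ico] at h1 h2
    rcases lt_or_gt_of_ne hj with h | h
    · have : ((v j : ℕ) : ℝ) + 1 ≤ ((w j : ℕ) : ℝ) := by exact_mod_cast h
      nlinarith [h1.2, h2.1]
    · have : ((w j : ℕ) : ℝ) + 1 ≤ ((v j : ℕ) : ℝ) := by exact_mod_cast h
      nlinarith [h2.2, h1.1]
  -- volume of A v
  have hvol : ∀ v, volume (A v) = ENNReal.ofReal s ^ d := by
    intro v
    rw [hApi, volume_pi_pi]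
    have : ∀ j : Fin d, volume (Set.Ico ((v j : ℝ) * s) (((v j : ℝ) + 1) * s))
        = ENNReal.ofReal s := by
      intro j; rw [Real.volume_Ico]; congr 1; ring
    simp [this]
  have hvolr : ∀ v, (volume (A v)).toReal = s ^ d := by
    intro v; rw [hvol, ← ENNReal.ofReal_pow hs.le, ENNReal.toReal_ofReal (by positivity)]
  -- log q continuous on Qc
  have hlog_cont : ContinuousOn (fun x => Real.log (q x)) Qc := by
    exact Real.continuousOn_log.comp hq_cont
      (fun x hx => by simpa using (hq_pos x hx).ne')
  have hg_cont : ContinuousOn (fun x => q x * Real.log (q x)) Qc :=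
    hq_cont.mul hlog_cont
  -- integrability
  have hq_intQc : IntegrableOn q Qc := hq_cont.integrableOn_compact hQcComp
  have hg_intQc : IntegrableOn (fun x => q x * Real.log (q x)) Qc :=
    hg_cont.integrableOn_compact hQcComp
  have hq_intA : ∀ v, IntegrableOn q (A v) :=
    fun v => hq_intQc.mono_set ((hAcl v).trans (hclQc v))
  have hg_intA : ∀ v, IntegrableOn (fun x => q x * Real.log (q x)) (A v) :=
    fun v => hg_intQc.mono_set ((hAcl v).trans (hclQc v))
  -- mean value: choose ξ v
  have hxi : ∀ v, ∃ ξ ∈ clA v, p v = q ξ * s ^ d := by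
    intro v
    have hne : (clA v).Nonempty := by
      refine ⟨fun j => (v j : ℝ) * s, fun j _ => ?_⟩
      simp only [Set.mem_Icc]
      exact ⟨le_refl _, by nlinarith⟩
    have hcont : ContinuousOn q (clA v) := hq_cont.mono (hclQc v)
    obtain ⟨a, haK, ha⟩ := (hclComp v).exists_isMinOn hne hcont
    obtain ⟨b, hbK, hb⟩ := (hclComp v).exists_isMaxOn hne hcont
    have hlow : q a * s ^ d ≤ p v := by
      rw [hp]
      calc q a * s ^ d = ∫ _ in A v, q a := by
            rw [setIntegral_const, measureReal_def, hvolr, smul_eq_mul, mul_comm]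
        _ ≤ ∫ x in A v, q x := by
            apply setIntegral_mono_on (integrableOn_const ?_) (hq_intA v)
              (hAmeas v) (fun x hx => ha (hAcl v hx))
            rw [hvol]
            exact (ENNReal.pow_lt_top ENNReal.ofReal_lt_top).ne
    have hhigh : p v ≤ q b * s ^ d := by
      rw [hp]
      calc (∫ x in A v, q x) ≤ ∫ _ in A v, q b := by
            apply setIntegral_mono_on (hq_intA v) (integrableOn_const ?_)
              (hAmeas v) (fun x hx => hb (hAcl v hx))
            rw [hvol]
            exact (ENNReal.pow_lt_top ENNReal.ofReal_lt_top).ne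
        _ = q b * s ^ d := by rw [setIntegral_const, measureReal_def, hvolr, smul_eq_mul, mul_comm]
    have hpre : IsPreconnected (clA v) := by
      apply Convex.isPreconnected
      exact convex_pi (fun j _ => convex_Icc _ _)
    have hmem : p v / s ^ d ∈ Set.Icc (q a) (q b) := by
      have hsd : (0:ℝ) < s ^ d := by positivity
      constructor
      · rw [le_div_iff₀ hsd]; linarith
      · rw [div_le_iff₀ hsd]; linarith
    obtain ⟨ξ, hξ, hξq⟩ := hpre.intermediate_value haK hbK hcont hmem
    refine ⟨ξ, hξ, ?_⟩
    rw [hξq]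
    field_simp
  choose ξ hξmem hξval using hxi
  -- positivity of p v and log formula
  have hqξpos : ∀ v, 0 < q (ξ v) := fun v => hq_pos _ (hclQc v (hξmem v))
  have hppos : ∀ v, 0 < p v := by
    intro v; rw [hξval]; exact mul_pos (hqξpos v) (by positivity)
  have hlogp : ∀ v, Real.log (p v) = Real.log (q (ξ v)) + d * Real.log s := by
    intro v
    rw [hξval, Real.log_mul (hqξpos v).ne' (by positivity), Real.log_pow]
  -- sums of integrals
  have hsum_int : ∀ f : (Fin d → ℝ) → ℝ, IntegrableOn f Q →
      ∫ x in Q, f x = ∑ v, ∫ x in A v, f x := by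
    intro f hf
    rw [hUnion] at hf ⊢
    rw [integral_iUnion hAmeas hdisj hf, tsum_fintype]
  have hsum1 : ∑ v, p v = 1 := by
    rw [← hq_int, hsum_int q (hq_intQc.mono_set hQQc)]
    exact Finset.sum_congr rfl (fun v _ => hp v)
  have hsumg : ∫ x in Q, q x * Real.log (q x)
      = ∑ v, ∫ x in A v, q x * Real.log (q x) :=
    hsum_int _ (hg_intQc.mono_set hQQc)
  -- δ bounds
  set S : Set ℝ := {t : ℝ | ∃ x ∈ Qc, ∃ y ∈ Qc,
      ‖x - y‖ ≤ s ∧ t = |Real.log (q x) - Real.log (q y)|} with hS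
  obtain ⟨C, hC⟩ := hQcComp.exists_bound_of_continuousOn hlog_cont
  have hBdd : BddAbove S := by
    refine ⟨2 * C, ?_⟩
    rintro t ⟨x, hx, y, hy, -, rfl⟩
    have h1 := hC x hx
    have h2 := hC y hy
    rw [Real.norm_eq_abs] at h1 h2
    calc |Real.log (q x) - Real.log (q y)| ≤ |Real.log (q x)| + |Real.log (q y)| :=
          abs_sub _ _
      _ ≤ 2 * C := by linarith
  have hδle : ∀ v, ∀ x ∈ A v, |Real.log (q x) - Real.log (q (ξ v))| ≤ δ := by
    intro v x hx
    rw [hδ]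
    apply le_csSup hBdd
    refine ⟨x, hclQc v (hAcl v hx), ξ v, hclQc v (hξmem v), ?_, rfl⟩
    rw [pi_norm_le_iff_of_nonneg hs.le]
    intro j
    have h1 : x ∈ clA v := hAcl v hx
    have h2 := (h1 j (Set.mem_univ j))
    have h3 := (hξmem v j (Set.mem_univ j))
    simp only [Set.mem_Icc] at h2 h3
    simp only [Pi.sub_apply, Real.norm_eq_abs, abs_le]
    constructor <;> nlinarith [h2.1, h2.2, h3.1, h3.2]
  -- per-cube bound
  have hterm : ∀ v, |(∫ x in A v, q x * Real.log (q x)) - p v * Real.log (q (ξ v))|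
      ≤ δ * p v := by
    intro v
    set c := Real.log (q (ξ v)) with hc
    have hconst : IntegrableOn (fun x => q x * c) (A v) := (hq_intA v).mul_const c
    have h1 : (∫ x in A v, q x * Real.log (q x)) - p v * c
        = ∫ x in A v, (q x * Real.log (q x) - q x * c) := by
      rw [integral_sub (hg_intA v) hconst, integral_mul_const, hp]
    rw [h1]
    have h2 : IntegrableOn (fun x => q x * Real.log (q x) - q x * c) (A v) :=
      (hg_intA v).sub hconst
    calc |∫ x in A v, (q x * Real.log (q x) - q x * c)|
        ≤ ∫ x in A v, |q x * Real.log (q x) - q x * c| := by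
          simpa [Real.norm_eq_abs] using norm_integral_le_integral_norm
            (μ := volume.restrict (A v)) (fun x => q x * Real.log (q x) - q x * c)
      _ ≤ ∫ x in A v, δ * q x := by
          apply setIntegral_mono_on h2.abs ((hq_intA v).const_mul δ) (hAmeas v)
          intro x hx
          have hxQc : x ∈ Qc := hclQc v (hAcl v hx)
          have hq0 : 0 ≤ q x := (hq_pos x hxQc).le
          have : q x * Real.log (q x) - q x * c = q x * (Real.log (q x) - c) := by ring
          rw [this, abs_mul, abs_of_nonneg hq0, mul_comm δ (q x)]
          exact mul_le_mul_of_nonneg_left (hδle v x hx) hq0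
      _ = δ * p v := by rw [integral_const_mul, hp]
  -- assemble
  have hkey : (-∑ v, p v * Real.log (p v)) + (d : ℝ) * Real.log s
      + ∫ x in Q, q x * Real.log (q x)
      = ∑ v, ((∫ x in A v, q x * Real.log (q x)) - p v * Real.log (q (ξ v))) := by
    rw [hsumg, Finset.sum_sub_distrib]
    have : ∑ v, p v * Real.log (p v)
        = (∑ v, p v * Real.log (q (ξ v))) + (d:ℝ) * Real.log s := by
      rw [show ∑ v, p v * Real.log (p v)
          = ∑ v, (p v * Real.log (q (ξ v)) + p v * (d * Real.log s)) from
        Finset.sum_congr rfl (fun v _ => by rw [hlogp v]; ring),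
        Finset.sum_add_distrib, ← Finset.sum_mul, hsum1]
      ring
    rw [this]
    ring
  rw [hkey]
  calc |∑ v, ((∫ x in A v, q x * Real.log (q x)) - p v * Real.log (q (ξ v)))|
      ≤ ∑ v, |(∫ x in A v, q x * Real.log (q x)) - p v * Real.log (q (ξ v))| :=
        Finset.abs_sum_le_sum_abs _ _
    _ ≤ ∑ v, δ * p v := Finset.sum_le_sum (fun v _ => hterm v)
    _ = δ := by rw [← Finset.mul_sum, hsum1, mul_one]
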